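/- arXiv:2401.12967 — 3 statements merged into one kernel-verified Lean document; each statement's English description precedes it below -/
import Mathlib

section
/- Let π₀ be a probability measure on ℝ^d and let h : ℝ^d → ℝ be measurable such that x ↦ (1 + |h(x)|)(1 + e^{−h(x)}) is π₀-integrable, and let g : ℝ^d → ℝ be bounded and measurable. Then the map t ↦ ∫ g dπ_t is differentiable on (0,1) with d/dt ∫ g dπ_t = −( ∫ g·h dπ_t − (∫ g dπ_t)(∫ h dπ_t) ), i.e. the derivative equals minus the covariance of g and h under π_t. In particular, for a bounded positive definite kernel k and each fixed y ∈ ℝ^d, the kernel mean embedding t ↦ ∫ k(y,x) dπ_t(x) satisfies d/dt ∫ k(y,x) dπ_t(x) = −Cov_{x∼π_t}[k(y,x), h(x)]. -/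
open MeasureTheory Real

/-- The tempered interpolation `π_t` between the prior `π₀` and the posterior,
with density `e^{-t·h}/Z_t` with respect to `π₀`. -/
noncomputable def temperedMeasure {d : ℕ} (π₀ : Measure (EuclideanSpace ℝ (Fin d)))
    (h : EuclideanSpace ℝ (Fin d) → ℝ) (t : ℝ) : Measure (EuclideanSpace ℝ (Fin d)) :=
  π₀.withDensity (fun x => ENNReal.ofReal
    (Real.exp (-(t * h x)) / ∫ y, Real.exp (-(t * h y)) ∂π₀))

/-- Covariance of two functions under a measure:
`Cov_π[f,g] = ∫ f·g dπ - (∫ f dπ)(∫ g dπ)`. -/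
noncomputable def covFun {α : Type*} [MeasurableSpace α] (P : Measure α) (f g : α → ℝ) : ℝ :=
  (∫ x, f x * g x ∂P) - (∫ x, f x ∂P) * (∫ x, g x ∂P)

lemma exp_bound_aux {s c : ℝ} (h0 : 0 ≤ s) (h1 : s ≤ 1) :
    Real.exp (-(s * c)) ≤ 1 + Real.exp (-c) := by
  rcases le_or_gt 0 c with hc | hc
  · have h2 : -(s * c) ≤ 0 := by nlinarith
    have := Real.exp_le_one_iff.mpr h2
    have := Real.exp_pos (-c)
    linarith
  · have h2 : -(s * c) ≤ -c := by nlinarith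
    have := Real.exp_le_exp.mpr h2
    linarith

lemma tempered_hasDerivAt {d : ℕ} (π₀ : Measure (EuclideanSpace ℝ (Fin d)))
    [IsProbabilityMeasure π₀]
    (h : EuclideanSpace ℝ (Fin d) → ℝ) (hmeas : Measurable h)
    (hint : Integrable (fun x => (1 + |h x|) * (1 + Real.exp (-h x))) π₀)
    (g : EuclideanSpace ℝ (Fin d) → ℝ) (gmeas : Measurable g)
    (M : ℝ) (hM : ∀ x, |g x| ≤ M) (t : ℝ) (ht : t ∈ Set.Ioo (0:ℝ) 1) :
    HasDerivAt (fun s => ∫ x, g x ∂(temperedMeasure π₀ h s))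
      (-(covFun (temperedMeasure π₀ h t) g h)) t := by
  obtain ⟨ht0, ht1⟩ := ht
  have hDnn : ∀ x, 0 ≤ (1 + |h x|) * (1 + Real.exp (-h x)) := fun x => by positivity
  -- integrability of the exponential for s ∈ [0,1]
  have hintExp : ∀ s ∈ Set.Icc (0:ℝ) 1, Integrable (fun x => Real.exp (-(s * h x))) π₀ := by
    intro s hs
    refine hint.mono ((hmeas.const_mul s).neg.exp).aestronglyMeasurable ?_
    filter_upwards with x
    rw [Real.norm_eq_abs, abs_of_pos (Real.exp_pos _), Real.norm_eq_abs,
      abs_of_nonneg (hDnn x)]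
    have h1 := exp_bound_aux hs.1 hs.2 (c := h x)
    nlinarith [Real.exp_pos (-h x), abs_nonneg (h x)]
  have hZpos : ∀ s ∈ Set.Icc (0:ℝ) 1, 0 < ∫ x, Real.exp (-(s * h x)) ∂π₀ := by
    intro s hs
    exact integral_exp_pos (f := fun x => -(s * h x)) (hintExp s hs)
  -- key derivative lemma for bounded measurable f
  have key : ∀ (K : ℝ) (f : EuclideanSpace ℝ (Fin d) → ℝ), Measurable f →
      (∀ x, |f x| ≤ K) →
      HasDerivAt (fun s => ∫ x, f x * Real.exp (-(s * h x)) ∂π₀)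
        (∫ x, f x * (-h x) * Real.exp (-(t * h x)) ∂π₀) t := by
    intro K f fmeas hK
    have hK0 : 0 ≤ K := (abs_nonneg _).trans (hK 0)
    have hε_pos : 0 < min t (1 - t) := lt_min ht0 (by linarith)
    have hball : ∀ s ∈ Metric.ball t (min t (1 - t)), s ∈ Set.Icc (0:ℝ) 1 := by
      intro s hs
      rw [Metric.mem_ball, Real.dist_eq] at hs
      obtain ⟨hl, hr⟩ := abs_lt.mp hs
      have h1 := min_le_left t (1 - t)
      have h2 := min_le_right t (1 - t)
      constructor <;> [linarith; linarith]
    have main := hasDerivAt_integral_of_dominated_loc_of_deriv_le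
      (μ := π₀) (x₀ := t)
      (F := fun s x => f x * Real.exp (-(s * h x)))
      (F' := fun s x => f x * (-h x) * Real.exp (-(s * h x)))
      (bound := fun x => K * ((1 + |h x|) * (1 + Real.exp (-h x))))
      (Metric.ball_mem_nhds t hε_pos)
      (Filter.Eventually.of_forall fun s =>
        (fmeas.mul ((hmeas.const_mul s).neg.exp)).aestronglyMeasurable)
      ?_ ?_ ?_ (hint.const_mul K) ?_
    · exact main.2
    · -- integrability of F t
      refine (hint.const_mul K).mono
        ((fmeas.mul ((hmeas.const_mul t).neg.exp)).aestronglyMeasurable) ?_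
      filter_upwards with x
      rw [Real.norm_eq_abs, abs_mul, abs_of_pos (Real.exp_pos _), Real.norm_eq_abs,
        abs_of_nonneg (by positivity : (0:ℝ) ≤ K * ((1 + |h x|) * (1 + Real.exp (-h x))))]
      have h1 := exp_bound_aux ht0.le ht1.le (c := h x)
      nlinarith [mul_le_mul (hK x) h1 (Real.exp_pos _).le hK0,
        mul_nonneg (mul_nonneg hK0 (abs_nonneg (h x)))
          (by positivity : (0:ℝ) ≤ 1 + Real.exp (-h x))]
    · exact ((fmeas.mul hmeas.neg).mul ((hmeas.const_mul t).neg.exp)).aestronglyMeasurable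
    · -- bound
      filter_upwards with x
      intro s hs
      obtain ⟨hs0, hs1⟩ := hball s hs
      rw [Real.norm_eq_abs, abs_mul, abs_mul, abs_neg, abs_of_pos (Real.exp_pos _)]
      have h1 := exp_bound_aux hs0 hs1 (c := h x)
      nlinarith [Real.exp_pos (-h x), abs_nonneg (h x), hK x, abs_nonneg (f x),
        Real.exp_pos (-(s * h x)),
        mul_le_mul_of_nonneg_left h1 (abs_nonneg (h x)),
        mul_le_mul_of_nonneg_right (hK x) (mul_nonneg (abs_nonneg (h x))
          (Real.exp_pos (-(s * h x))).le)]
    · -- differentiability pointwise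
      filter_upwards with x
      intro s hs
      have hexp : HasDerivAt (fun u : ℝ => Real.exp (-(u * h x)))
          (Real.exp (-(s * h x)) * -(h x)) s :=
        ((hasDerivAt_mul_const (h x)).neg).exp
      have : HasDerivAt (fun u : ℝ => f x * Real.exp (-(u * h x)))
          (f x * (Real.exp (-(s * h x)) * -(h x))) s := hexp.const_mul (f x)
      exact this.congr_deriv (by ring)
  -- representation of the tempered integral
  have hrepr : ∀ (f : EuclideanSpace ℝ (Fin d) → ℝ) (s : ℝ),
      ∫ x, f x ∂(temperedMeasure π₀ h s)
        = (∫ x, f x * Real.exp (-(s * h x)) ∂π₀) / ∫ x, Real.exp (-(s * h x)) ∂π₀ := by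
    intro f s
    rw [show temperedMeasure π₀ h s = π₀.tilted (fun x => -(s * h x)) from rfl,
      integral_tilted]
    simp only [smul_eq_mul]
    rw [← integral_div]
    congr 1
    funext x
    ring
  have hZne : (∫ x, Real.exp (-(t * h x)) ∂π₀) ≠ 0 :=
    (hZpos t ⟨ht0.le, ht1.le⟩).ne'
  have hA := key M g gmeas hM
  have hZ := key 1 (fun _ => 1) measurable_const (fun x => by norm_num)
  simp only [one_mul] at hZ
  have hdiv : HasDerivAt (fun s => (∫ x, g x * Real.exp (-(s * h x)) ∂π₀)
      / ∫ x, Real.exp (-(s * h x)) ∂π₀) _ t := hA.div hZ hZne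
  have hfun : (fun s => ∫ x, g x ∂(temperedMeasure π₀ h s))
      = fun s => (∫ x, g x * Real.exp (-(s * h x)) ∂π₀)
          / ∫ x, Real.exp (-(s * h x)) ∂π₀ := funext (hrepr g)
  rw [hfun]
  convert hdiv using 1
  rw [covFun, hrepr (fun x => g x * h x) t, hrepr g t, hrepr h t]
  have e1 : (∫ x, g x * (-h x) * Real.exp (-(t * h x)) ∂π₀)
      = -∫ x, g x * h x * Real.exp (-(t * h x)) ∂π₀ := by
    rw [← integral_neg]; congr 1; funext x; ring
  have e2 : (∫ x, -h x * Real.exp (-(t * h x)) ∂π₀)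
      = -∫ x, h x * Real.exp (-(t * h x)) ∂π₀ := by
    rw [← integral_neg]; congr 1; funext x; ring
  rw [e1, e2]
  field_simp
  simp only [fun x => mul_comm (h x) t]
  ring

/-- For bounded measurable `g`, the map `t ↦ ∫ g dπ_t` is differentiable on
`(0,1)` with derivative `-Cov_{π_t}[g,h]`; in particular, for a bounded positive definite
kernel `k` and fixed `y`, the kernel mean embedding `t ↦ ∫ k(y,x) dπ_t(x)` satisfies
`d/dt ∫ k(y,·) dπ_t = -Cov_{π_t}[k(y,·), h]`. -/
theorem stmt3 {d : ℕ} (π₀ : Measure (EuclideanSpace ℝ (Fin d))) [IsProbabilityMeasure π₀]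
    (h : EuclideanSpace ℝ (Fin d) → ℝ) (hmeas : Measurable h)
    (hint : Integrable (fun x => (1 + |h x|) * (1 + Real.exp (-h x))) π₀) :
    (∀ (g : EuclideanSpace ℝ (Fin d) → ℝ), Measurable g → (∃ M, ∀ x, |g x| ≤ M) →
      ∀ t ∈ Set.Ioo (0 : ℝ) 1,
        HasDerivAt (fun s => ∫ x, g x ∂(temperedMeasure π₀ h s))
          (-(covFun (temperedMeasure π₀ h t) g h)) t) ∧
    (∀ (k : EuclideanSpace ℝ (Fin d) → EuclideanSpace ℝ (Fin d) → ℝ),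
      Measurable (fun p : EuclideanSpace ℝ (Fin d) × EuclideanSpace ℝ (Fin d) => k p.1 p.2) →
      (∃ M, ∀ x y, |k x y| ≤ M) →
      (∀ x y, k x y = k y x) →
      (∀ (N : ℕ) (α : Fin N → ℝ) (x : Fin N → EuclideanSpace ℝ (Fin d)),
        0 ≤ ∑ i, ∑ j, α i * α j * k (x i) (x j)) →
      ∀ (y : EuclideanSpace ℝ (Fin d)), ∀ t ∈ Set.Ioo (0 : ℝ) 1,
        HasDerivAt (fun s => ∫ x, k y x ∂(temperedMeasure π₀ h s))
          (-(covFun (temperedMeasure π₀ h t) (fun x => k y x) h)) t) := by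
  constructor
  · rintro g gmeas ⟨M, hM⟩ t ht
    exact tempered_hasDerivAt π₀ h hmeas hint g gmeas M hM t ht
  · rintro k kmeas ⟨M, hMk⟩ _ _ y t ht
    exact tempered_hasDerivAt π₀ h hmeas hint (fun x => k y x)
      (kmeas.comp measurable_prodMk_left) M (fun x => hMk y x) t ht
end

section
/- Let k : ℝ^d × ℝ^d → ℝ be symmetric and continuously differentiable in each argument with sup_{x,z} ‖∇_z k(x,z)‖ < ∞, let ρ be a probability measure on ℝ^d, and let C ∈ ℝ^{d×d} be symmetric positive semidefinite. Define G_{ρ,C}(x,y) := ∫ ⟨∇_z k(x,z), C ∇_z k(y,z)⟩ dρ(z). Then for every α ∈ L²(ρ), ∬ α(x) G_{ρ,C}(x,y) α(y) dρ(x) dρ(y) = ∫ ‖C^{1/2} ∫ ∇_z k(x,z) α(x) dρ(x)‖² dρ(z) ≥ 0; in particular the integral operator T : L²(ρ) → L²(ρ), (Tα)(x) := ∫ G_{ρ,C}(x,y) α(y) dρ(y), is a bounded self-adjoint positive operator. -/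
open MeasureTheory RealInnerProductSpace Filter Topology
open scoped ENNReal NNReal

/-- The positive semidefinite square root of a positive semidefinite matrix
(removed from Mathlib; restored here with its former definition). -/
noncomputable def Matrix.PosSemidef.sqrt {n 𝕜 : Type*} [Fintype n] [DecidableEq n] [RCLike 𝕜] [PartialOrder 𝕜]
    {A : Matrix n n 𝕜} (hA : A.PosSemidef) : Matrix n n 𝕜 :=
  hA.1.eigenvectorUnitary.1 * Matrix.diagonal ((↑) ∘ (√·) ∘ hA.1.eigenvalues) *
    (star hA.1.eigenvectorUnitary : Matrix n n 𝕜)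

private lemma psd_sqrt_mul_self {d : ℕ} {C : Matrix (Fin d) (Fin d) ℝ} (hC : C.PosSemidef) :
    hC.sqrt * hC.sqrt = C := by
  have hU : (star hC.1.eigenvectorUnitary : Matrix (Fin d) (Fin d) ℝ) *
      hC.1.eigenvectorUnitary.1 = 1 := Unitary.coe_star_mul_self _
  have hD : Matrix.diagonal ((↑) ∘ (√·) ∘ hC.1.eigenvalues) *
      Matrix.diagonal ((↑) ∘ (√·) ∘ hC.1.eigenvalues)
      = Matrix.diagonal (RCLike.ofReal ∘ hC.1.eigenvalues : Fin d → ℝ) := by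
    rw [Matrix.diagonal_mul_diagonal]
    congr 1; funext i
    simp [Real.mul_self_sqrt (hC.eigenvalues_nonneg i)]
  have key : ∀ (U S D E : Matrix (Fin d) (Fin d) ℝ), S * U = 1 → D * D = E →
      U * D * S * (U * D * S) = U * E * S := by
    intro U S D E h1 h2
    calc U * D * S * (U * D * S) = U * D * (S * U) * D * S := by simp only [Matrix.mul_assoc]
      _ = U * E * S := by rw [h1, Matrix.mul_one, ← h2, Matrix.mul_assoc U D D]
  conv_rhs => rw [hC.1.spectral_theorem]
  simp only [Matrix.PosSemidef.sqrt, Unitary.conjStarAlgAut_apply]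
  exact key _ _ _ _ hU hD

private lemma psd_sqrt_herm {d : ℕ} {C : Matrix (Fin d) (Fin d) ℝ} (hC : C.PosSemidef) :
    hC.sqrt.IsHermitian := by
  simp only [Matrix.IsHermitian, Matrix.PosSemidef.sqrt, Matrix.conjTranspose_mul,
    Matrix.diagonal_conjTranspose, Matrix.star_eq_conjTranspose, Matrix.conjTranspose_conjTranspose]
  simp [Matrix.mul_assoc]



private lemma meas_sep_cont {d : ℕ} {f : EuclideanSpace ℝ (Fin d) → EuclideanSpace ℝ (Fin d) → ℝ}
    (h1 : ∀ x, Continuous fun z => f x z) (h2 : ∀ z, Continuous fun x => f x z) :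
    Measurable fun p : EuclideanSpace ℝ (Fin d) × EuclideanSpace ℝ (Fin d) => f p.1 p.2 := by
  have key : ∀ s : SimpleFunc (EuclideanSpace ℝ (Fin d)) (EuclideanSpace ℝ (Fin d)),
      Measurable fun p : EuclideanSpace ℝ (Fin d) × EuclideanSpace ℝ (Fin d) => f (s p.1) p.2 := by
    classical
    intro s
    have heq : (fun p : EuclideanSpace ℝ (Fin d) × EuclideanSpace ℝ (Fin d) => f (s p.1) p.2)
        = fun p => ∑ v ∈ s.range, if s p.1 = v then f v p.2 else 0 := by
      funext p
      rw [Finset.sum_ite_eq s.range (s p.1) fun v => f v p.2, if_pos (s.mem_range_self p.1)]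
    rw [heq]
    refine Finset.measurable_sum _ fun v _ => ?_
    refine Measurable.ite ?_ ((h1 v).measurable.comp measurable_snd) measurable_const
    exact (s.measurable.comp measurable_fst) (measurableSet_singleton v)
  refine measurable_of_tendsto_metrizable
    (fun n => key (SimpleFunc.approxOn id measurable_id Set.univ 0 (Set.mem_univ 0) n))
    (tendsto_pi_nhds.2 fun p => ?_)
  exact ((h2 p.2).tendsto p.1).comp
    (SimpleFunc.tendsto_approxOn measurable_id (Set.mem_univ 0) (by simp))

private lemma meas_grad {d : ℕ} {k : EuclideanSpace ℝ (Fin d) → EuclideanSpace ℝ (Fin d) → ℝ}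
    (h1 : ∀ x, ContDiff ℝ 1 fun z => k x z) (h2 : ∀ z, Continuous fun x => k x z) :
    Measurable fun p : EuclideanSpace ℝ (Fin d) × EuclideanSpace ℝ (Fin d) =>
      gradient (fun w => k p.1 w) p.2 := by
  have hk : Measurable fun p : EuclideanSpace ℝ (Fin d) × EuclideanSpace ℝ (Fin d) => k p.1 p.2 :=
    meas_sep_cont (fun x => (h1 x).continuous) h2
  have hcomp : ∀ v : EuclideanSpace ℝ (Fin d),
      Measurable fun p : EuclideanSpace ℝ (Fin d) × EuclideanSpace ℝ (Fin d) =>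
        ⟪gradient (fun w => k p.1 w) p.2, v⟫ := by
    intro v
    have hlim : ∀ p : EuclideanSpace ℝ (Fin d) × EuclideanSpace ℝ (Fin d),
        Tendsto (fun n : ℕ => ((n : ℝ) + 1) • (k p.1 (p.2 + ((n : ℝ) + 1)⁻¹ • v) - k p.1 p.2))
          atTop (𝓝 (⟪gradient (fun w => k p.1 w) p.2, v⟫)) := by
      intro p
      have hd : HasFDerivAt (fun w => k p.1 w) (fderiv ℝ (fun w => k p.1 w) p.2) p.2 :=
        (((h1 p.1).differentiable one_ne_zero) p.2).hasFDerivAt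
      have hgr : ⟪gradient (fun w => k p.1 w) p.2, v⟫
          = fderiv ℝ (fun w => k p.1 w) p.2 v := by
        rw [gradient, InnerProductSpace.toDual_symm_apply]
      rw [hgr]
      refine hd.lim v ?_
      have h0 : Tendsto (fun n : ℕ => (n : ℝ) + 1) atTop atTop :=
        tendsto_atTop_add_const_right _ 1 tendsto_natCast_atTop_atTop
      exact tendsto_norm_atTop_atTop.comp h0
    refine measurable_of_tendsto_metrizable (fun n => ?_) (tendsto_pi_nhds.2 hlim)
    have hk2 : Measurable fun p : EuclideanSpace ℝ (Fin d) × EuclideanSpace ℝ (Fin d) =>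
        k p.1 (p.2 + ((n : ℝ) + 1)⁻¹ • v) :=
      hk.comp (measurable_fst.prodMk (measurable_snd.add_const _))
    simpa [smul_eq_mul] using (hk2.sub hk).const_mul ((n : ℝ) + 1)
  have : (fun p : EuclideanSpace ℝ (Fin d) × EuclideanSpace ℝ (Fin d) =>
      gradient (fun w => k p.1 w) p.2) = fun p =>
      gradient (fun w => k p.1 w) p.2 := rfl
  have hm : Measurable fun p : EuclideanSpace ℝ (Fin d) × EuclideanSpace ℝ (Fin d) =>
      (WithLp.ofLp (gradient (fun w => k p.1 w) p.2) : Fin d → ℝ) := by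
    refine measurable_pi_iff.2 fun i => ?_
    have := hcomp (EuclideanSpace.single i (1 : ℝ))
    convert this using 2 with p
    rw [EuclideanSpace.inner_single_right]
    simp
  exact (PiLp.continuous_toLp 2 _).measurable.comp hm

private lemma inner_toEuclideanLin_symm {d : ℕ} {P : Matrix (Fin d) (Fin d) ℝ}
    (hP : P.IsHermitian) (u v : EuclideanSpace ℝ (Fin d)) :
    ⟪u, Matrix.toEuclideanLin P v⟫ = ⟪Matrix.toEuclideanLin P u, v⟫ := by
  have hsym : ∀ i j, P i j = P j i := fun i j => by
    have := hP.apply i j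
    simpa using this.symm
  have hPv : ∀ (w : EuclideanSpace ℝ (Fin d)) (i : Fin d),
      (Matrix.toEuclideanLin P w) i = ∑ j, P i j * w j := fun w i => rfl
  simp only [PiLp.inner_apply, RCLike.inner_apply, conj_trivial]
  simp_rw [hPv, Finset.mul_sum, Finset.sum_mul]
  rw [Finset.sum_comm]
  refine Finset.sum_congr rfl fun a _ => Finset.sum_congr rfl fun b _ => ?_
  rw [hsym b a]; ring

private lemma toEuclideanLin_mul_apply {d : ℕ} (A B : Matrix (Fin d) (Fin d) ℝ)
    (u : EuclideanSpace ℝ (Fin d)) :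
    Matrix.toEuclideanLin (A * B) u = Matrix.toEuclideanLin A (Matrix.toEuclideanLin B u) := by
  simp [Matrix.toEuclideanLin_apply, Matrix.mulVec_mulVec]

private lemma inner_C_eq {d : ℕ} {C : Matrix (Fin d) (Fin d) ℝ} (hC : C.PosSemidef)
    (u : EuclideanSpace ℝ (Fin d)) :
    ⟪u, Matrix.toEuclideanLin C u⟫ = ‖Matrix.toEuclideanLin hC.sqrt u‖ ^ 2 := by
  conv_lhs => rw [← psd_sqrt_mul_self hC]
  rw [toEuclideanLin_mul_apply, inner_toEuclideanLin_symm (psd_sqrt_herm hC),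
    real_inner_self_eq_norm_sq]

private lemma innerK_meas {d : ℕ}
    (gr : EuclideanSpace ℝ (Fin d) → EuclideanSpace ℝ (Fin d) → EuclideanSpace ℝ (Fin d))
    (hgmeas : Measurable fun p : EuclideanSpace ℝ (Fin d) × EuclideanSpace ℝ (Fin d) =>
      gr p.1 p.2)
    (CL : EuclideanSpace ℝ (Fin d) →L[ℝ] EuclideanSpace ℝ (Fin d)) :
    Measurable fun q :
      (EuclideanSpace ℝ (Fin d) × EuclideanSpace ℝ (Fin d)) × EuclideanSpace ℝ (Fin d) =>
      ⟪gr q.1.1 q.2, CL (gr q.1.2 q.2)⟫ := by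
  have m1 : Measurable fun q :
      (EuclideanSpace ℝ (Fin d) × EuclideanSpace ℝ (Fin d)) × EuclideanSpace ℝ (Fin d) =>
      gr q.1.1 q.2 := hgmeas.comp (measurable_fst.fst.prodMk measurable_snd)
  have m2 : Measurable fun q :
      (EuclideanSpace ℝ (Fin d) × EuclideanSpace ℝ (Fin d)) × EuclideanSpace ℝ (Fin d) =>
      gr q.1.2 q.2 := hgmeas.comp (measurable_fst.snd.prodMk measurable_snd)
  exact m1.inner (CL.continuous.measurable.comp m2)

private lemma Gf_meas {d : ℕ}
    (gr : EuclideanSpace ℝ (Fin d) → EuclideanSpace ℝ (Fin d) → EuclideanSpace ℝ (Fin d))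
    (hgmeas : Measurable fun p : EuclideanSpace ℝ (Fin d) × EuclideanSpace ℝ (Fin d) =>
      gr p.1 p.2)
    (CL : EuclideanSpace ℝ (Fin d) →L[ℝ] EuclideanSpace ℝ (Fin d))
    (ρ : Measure (EuclideanSpace ℝ (Fin d))) [SFinite ρ] :
    StronglyMeasurable fun p : EuclideanSpace ℝ (Fin d) × EuclideanSpace ℝ (Fin d) =>
      ∫ z, ⟪gr p.1 z, CL (gr p.2 z)⟫ ∂ρ :=
  (innerK_meas gr hgmeas CL).stronglyMeasurable.integral_prod_right'

private lemma inner_bdd {d : ℕ}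
    (gr : EuclideanSpace ℝ (Fin d) → EuclideanSpace ℝ (Fin d) → EuclideanSpace ℝ (Fin d))
    (CL : EuclideanSpace ℝ (Fin d) →L[ℝ] EuclideanSpace ℝ (Fin d))
    (M₀ : ℝ) (hM₀ : ∀ x z, ‖gr x z‖ ≤ M₀)
    (x y z : EuclideanSpace ℝ (Fin d)) :
    |⟪gr x z, CL (gr y z)⟫| ≤ ‖CL‖ * (M₀ * M₀) := by
  have hM₀0 : (0:ℝ) ≤ M₀ := le_trans (norm_nonneg _) (hM₀ 0 0)
  have h1 := abs_real_inner_le_norm (gr x z) (CL (gr y z))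
  have h2 := CL.le_opNorm (gr y z)
  calc |⟪gr x z, CL (gr y z)⟫| ≤ ‖gr x z‖ * ‖CL (gr y z)‖ := h1
    _ ≤ M₀ * (‖CL‖ * M₀) := mul_le_mul (hM₀ x z)
        (h2.trans (mul_le_mul_of_nonneg_left (hM₀ y z) (norm_nonneg _))) (norm_nonneg _) hM₀0
    _ = ‖CL‖ * (M₀ * M₀) := by ring

set_option synthInstance.maxHeartbeats 400000 in
private lemma Gf_bdd {d : ℕ}
    (gr : EuclideanSpace ℝ (Fin d) → EuclideanSpace ℝ (Fin d) → EuclideanSpace ℝ (Fin d))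
    (CL : EuclideanSpace ℝ (Fin d) →L[ℝ] EuclideanSpace ℝ (Fin d))
    (M₀ : ℝ) (hM₀ : ∀ x z, ‖gr x z‖ ≤ M₀)
    (ρ : Measure (EuclideanSpace ℝ (Fin d))) [IsProbabilityMeasure ρ]
    (x y : EuclideanSpace ℝ (Fin d)) :
    |∫ z, ⟪gr x z, CL (gr y z)⟫ ∂ρ| ≤ ‖CL‖ * (M₀ * M₀) := by
  rw [← Real.norm_eq_abs]
  have h := norm_integral_le_of_norm_le_const
    (μ := ρ) (f := fun z => ⟪gr x z, CL (gr y z)⟫) (C := ‖CL‖ * (M₀ * M₀))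
    (Eventually.of_forall fun z => by
      rw [Real.norm_eq_abs]; exact inner_bdd gr CL M₀ hM₀ x y z)
  simpa using h

set_option maxHeartbeats 1000000 in
private lemma fubini_main {d : ℕ}
    (gr : EuclideanSpace ℝ (Fin d) → EuclideanSpace ℝ (Fin d) → EuclideanSpace ℝ (Fin d))
    (hgmeas : Measurable fun p : EuclideanSpace ℝ (Fin d) × EuclideanSpace ℝ (Fin d) =>
      gr p.1 p.2)
    (CL : EuclideanSpace ℝ (Fin d) →L[ℝ] EuclideanSpace ℝ (Fin d))
    (M₀ : ℝ) (hM₀ : ∀ x z, ‖gr x z‖ ≤ M₀)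
    (ρ : Measure (EuclideanSpace ℝ (Fin d))) [IsProbabilityMeasure ρ]
    (α : EuclideanSpace ℝ (Fin d) → ℝ) (hα : MemLp α 2 ρ) :
    (∫ x, ∫ y, α x * (∫ z, ⟪gr x z, CL (gr y z)⟫ ∂ρ) * α y ∂ρ ∂ρ)
      = ∫ z, ⟪∫ x, α x • gr x z ∂ρ, CL (∫ x, α x • gr x z ∂ρ)⟫ ∂ρ := by
  have hM₀0 : (0:ℝ) ≤ M₀ := le_trans (norm_nonneg _) (hM₀ 0 0)
  set K : ℝ := ‖CL‖ * (M₀ * M₀) with hK_def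
  have hαi : Integrable α ρ := hα.integrable one_le_two
  have hinner_bdd : ∀ x y z, |⟪gr x z, CL (gr y z)⟫| ≤ K := by
    intro x y z
    have h1 := abs_real_inner_le_norm (gr x z) (CL (gr y z))
    have h2 := CL.le_opNorm (gr y z)
    calc |⟪gr x z, CL (gr y z)⟫| ≤ ‖gr x z‖ * ‖CL (gr y z)‖ := h1
      _ ≤ M₀ * (‖CL‖ * M₀) := mul_le_mul (hM₀ x z)
          (h2.trans (mul_le_mul_of_nonneg_left (hM₀ y z) (norm_nonneg _))) (norm_nonneg _) hM₀0
      _ = K := by rw [hK_def]; ring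
  have hinner_meas : Measurable fun q :
      (EuclideanSpace ℝ (Fin d) × EuclideanSpace ℝ (Fin d)) × EuclideanSpace ℝ (Fin d) =>
      ⟪gr q.1.1 q.2, CL (gr q.1.2 q.2)⟫ := by
    have m1 : Measurable fun q :
        (EuclideanSpace ℝ (Fin d) × EuclideanSpace ℝ (Fin d)) × EuclideanSpace ℝ (Fin d) =>
        gr q.1.1 q.2 := hgmeas.comp (measurable_fst.fst.prodMk measurable_snd)
    have m2 : Measurable fun q :
        (EuclideanSpace ℝ (Fin d) × EuclideanSpace ℝ (Fin d)) × EuclideanSpace ℝ (Fin d) =>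
        gr q.1.2 q.2 := hgmeas.comp (measurable_fst.snd.prodMk measurable_snd)
    exact m1.inner (CL.continuous.measurable.comp m2)
  have hvint : ∀ z, Integrable (fun y => α y • gr y z) ρ := by
    intro z
    refine Integrable.mono' (hαi.norm.const_mul M₀)
      (hα.1.smul (hgmeas.comp (measurable_id.prodMk measurable_const)).aestronglyMeasurable)
      (Eventually.of_forall fun y => ?_)
    rw [norm_smul, mul_comm]
    exact mul_le_mul_of_nonneg_right (hM₀ y z) (norm_nonneg _)
  have hstep : ∀ z,
      (∫ x, ∫ y, α x * ⟪gr x z, CL (gr y z)⟫ * α y ∂ρ ∂ρ)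
        = ⟪∫ x, α x • gr x z ∂ρ, CL (∫ x, α x • gr x z ∂ρ)⟫ := by
    intro z
    have hi := hvint z
    have inner_y : ∀ x, (∫ y, α x * ⟪gr x z, CL (gr y z)⟫ * α y ∂ρ)
        = ⟪α x • gr x z, CL (∫ y, α y • gr y z ∂ρ)⟫ := by
      intro x
      have heq : ∀ y, α x * ⟪gr x z, CL (gr y z)⟫ * α y
          = ⟪α x • gr x z, CL (α y • gr y z)⟫ := by
        intro y
        rw [CL.map_smul, real_inner_smul_left, real_inner_smul_right]
        ring
      simp_rw [heq]
      have h := ((innerSL ℝ (α x • gr x z)).comp CL).integral_comp_comm hi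
      simp only [ContinuousLinearMap.comp_apply, innerSL_apply_apply] at h
      exact h
    simp_rw [inner_y]
    have h2 : ∀ x, ⟪α x • gr x z, CL (∫ y, α y • gr y z ∂ρ)⟫
        = ⟪CL (∫ y, α y • gr y z ∂ρ), α x • gr x z⟫ := fun x => real_inner_comm _ _
    simp_rw [h2]
    rw [integral_inner hi]
    exact real_inner_comm _ _
  set Φ : (EuclideanSpace ℝ (Fin d) × EuclideanSpace ℝ (Fin d)) × EuclideanSpace ℝ (Fin d) → ℝ
    := fun q => α q.1.1 * ⟪gr q.1.1 q.2, CL (gr q.1.2 q.2)⟫ * α q.1.2 with hΦ_def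
  have hΦmeas : AEStronglyMeasurable Φ ((ρ.prod ρ).prod ρ) :=
    (hα.1.comp_fst.comp_fst.mul hinner_meas.aestronglyMeasurable).mul hα.1.comp_snd.comp_fst
  have hΦbd : ∀ q, ‖Φ q‖ ≤ (K * ‖α q.1.1‖) * ‖α q.1.2‖ := by
    intro q
    simp only [hΦ_def, Real.norm_eq_abs, abs_mul]
    calc |α q.1.1| * |⟪gr q.1.1 q.2, CL (gr q.1.2 q.2)⟫| * |α q.1.2|
        ≤ |α q.1.1| * K * |α q.1.2| :=
          mul_le_mul_of_nonneg_right
            (mul_le_mul_of_nonneg_left (hinner_bdd _ _ _) (abs_nonneg _)) (abs_nonneg _)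
      _ = (K * |α q.1.1|) * |α q.1.2| := by ring
  have hdom : Integrable (fun q :
      (EuclideanSpace ℝ (Fin d) × EuclideanSpace ℝ (Fin d)) × EuclideanSpace ℝ (Fin d) =>
      (K * ‖α q.1.1‖) * ‖α q.1.2‖) ((ρ.prod ρ).prod ρ) := by
    have base : Integrable (fun p : EuclideanSpace ℝ (Fin d) × EuclideanSpace ℝ (Fin d) =>
        (K * ‖α p.1‖) * ‖α p.2‖) (ρ.prod ρ) := (hαi.norm.const_mul K).mul_prod hαi.norm
    have h := base.mul_prod (integrable_const (μ := ρ) (1:ℝ))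
    simpa using h
  have hΦ : Integrable Φ ((ρ.prod ρ).prod ρ) :=
    Integrable.mono' hdom hΦmeas (Eventually.of_forall hΦbd)
  have hΦz : ∀ z, Integrable (fun p : EuclideanSpace ℝ (Fin d) × EuclideanSpace ℝ (Fin d) =>
      Φ (p, z)) (ρ.prod ρ) := by
    intro z
    have hin : Measurable fun p : EuclideanSpace ℝ (Fin d) × EuclideanSpace ℝ (Fin d) =>
        ⟪gr p.1 z, CL (gr p.2 z)⟫ :=
      hinner_meas.comp (measurable_id.prodMk measurable_const)
    have hm : AEStronglyMeasurable (fun p :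
        EuclideanSpace ℝ (Fin d) × EuclideanSpace ℝ (Fin d) => Φ (p, z)) (ρ.prod ρ) :=
      (hα.1.comp_fst.mul hin.aestronglyMeasurable).mul hα.1.comp_snd
    refine Integrable.mono' ((hαi.norm.const_mul K).mul_prod hαi.norm) hm
      (Eventually.of_forall fun p => hΦbd (p, z))
  have hpt : ∀ x y, α x * (∫ z, ⟪gr x z, CL (gr y z)⟫ ∂ρ) * α y = ∫ z, Φ ((x, y), z) ∂ρ := by
    intro x y
    have heq : ∀ z, Φ ((x, y), z) = (α x * α y) * ⟪gr x z, CL (gr y z)⟫ := by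
      intro z; simp only [hΦ_def]; ring
    simp_rw [heq, integral_const_mul]
    ring
  calc (∫ x, ∫ y, α x * (∫ z, ⟪gr x z, CL (gr y z)⟫ ∂ρ) * α y ∂ρ ∂ρ)
      = ∫ x, ∫ y, ∫ z, Φ ((x, y), z) ∂ρ ∂ρ ∂ρ := by simp_rw [hpt]
    _ = ∫ p, ∫ z, Φ (p, z) ∂ρ ∂(ρ.prod ρ) := by
        rw [integral_integral (f := fun x y => ∫ z, Φ ((x, y), z) ∂ρ) hΦ.integral_prod_left]
    _ = ∫ z, ∫ p, Φ (p, z) ∂(ρ.prod ρ) ∂ρ :=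
        integral_integral_swap (f := fun p z => Φ (p, z)) hΦ
    _ = ∫ z, ⟪∫ x, α x • gr x z ∂ρ, CL (∫ x, α x • gr x z ∂ρ)⟫ ∂ρ := by
        refine integral_congr_ae (Eventually.of_forall fun z => ?_)
        exact ((integral_integral (f := fun x y => Φ ((x, y), z)) (hΦz z)).symm.trans (hstep z))

/-- The induced kernel `G_{ρ,C}(x,y) = ∫ ⟨∇_z k(x,z), C ∇_z k(y,z)⟩ dρ(z)`. -/
noncomputable def kernelG {d : ℕ} (k : EuclideanSpace ℝ (Fin d) → EuclideanSpace ℝ (Fin d) → ℝ)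
    (ρ : Measure (EuclideanSpace ℝ (Fin d))) (C : Matrix (Fin d) (Fin d) ℝ)
    (x y : EuclideanSpace ℝ (Fin d)) : ℝ :=
  ∫ z, ⟪gradient (fun w => k x w) z,
        Matrix.toEuclideanLin C (gradient (fun w => k y w) z)⟫ ∂ρ

/-- The integral operator `(Tα)(x) = ∫ G_{ρ,C}(x,y) α(y) dρ(y)` on `L²(ρ)`. -/
noncomputable def opT {d : ℕ} (k : EuclideanSpace ℝ (Fin d) → EuclideanSpace ℝ (Fin d) → ℝ)
    (ρ : Measure (EuclideanSpace ℝ (Fin d))) (C : Matrix (Fin d) (Fin d) ℝ)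
    (α : EuclideanSpace ℝ (Fin d) → ℝ) (x : EuclideanSpace ℝ (Fin d)) : ℝ :=
  ∫ y, kernelG k ρ C x y * α y ∂ρ

set_option maxHeartbeats 1000000 in
set_option synthInstance.maxHeartbeats 400000 in
/-- For a symmetric `C¹` kernel with uniformly bounded gradients and `C`
symmetric positive semidefinite, `∬ α(x) G_{ρ,C}(x,y) α(y) dρ dρ
= ∫ ‖C^{1/2} ∫ ∇_z k(x,z) α(x) dρ(x)‖² dρ(z) ≥ 0` for all `α ∈ L²(ρ)`; in particular the
integral operator `T` is bounded, self-adjoint and positive on `L²(ρ)`. -/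
theorem stmt6 {d : ℕ} (k : EuclideanSpace ℝ (Fin d) → EuclideanSpace ℝ (Fin d) → ℝ)
    (hk_sym : ∀ x y, k x y = k y x)
    (hk_smooth : ∀ x, ContDiff ℝ 1 (fun z => k x z) ∧ ContDiff ℝ 1 (fun z => k z x))
    (hk_grad_bdd : ∃ M, ∀ x z, ‖gradient (fun w => k x w) z‖ ≤ M)
    (ρ : Measure (EuclideanSpace ℝ (Fin d))) [IsProbabilityMeasure ρ]
    (C : Matrix (Fin d) (Fin d) ℝ) (hC : C.PosSemidef) :
    (∀ α : EuclideanSpace ℝ (Fin d) → ℝ, MemLp α 2 ρ →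
      (∫ x, ∫ y, α x * kernelG k ρ C x y * α y ∂ρ ∂ρ)
        = (∫ z, ‖Matrix.toEuclideanLin hC.sqrt
            (∫ x, α x • gradient (fun w => k x w) z ∂ρ)‖ ^ 2 ∂ρ) ∧
      0 ≤ ∫ x, ∫ y, α x * kernelG k ρ C x y * α y ∂ρ ∂ρ) ∧
    (∀ α : EuclideanSpace ℝ (Fin d) → ℝ, MemLp α 2 ρ → MemLp (opT k ρ C α) 2 ρ) ∧
    (∃ M : NNReal, ∀ α : EuclideanSpace ℝ (Fin d) → ℝ, MemLp α 2 ρ →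
      eLpNorm (opT k ρ C α) 2 ρ ≤ M * eLpNorm α 2 ρ) ∧
    (∀ α β : EuclideanSpace ℝ (Fin d) → ℝ, MemLp α 2 ρ → MemLp β 2 ρ →
      ∫ x, opT k ρ C α x * β x ∂ρ = ∫ x, α x * opT k ρ C β x ∂ρ) ∧
    (∀ α : EuclideanSpace ℝ (Fin d) → ℝ, MemLp α 2 ρ →
      0 ≤ ∫ x, α x * opT k ρ C α x ∂ρ) := by
  classical
  obtain ⟨M₀, hM₀⟩ := hk_grad_bdd
  have hM₀0 : (0:ℝ) ≤ M₀ := le_trans (norm_nonneg _) (hM₀ 0 0)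
  have hgmeas : Measurable fun p : EuclideanSpace ℝ (Fin d) × EuclideanSpace ℝ (Fin d) =>
      gradient (fun w => k p.1 w) p.2 :=
    meas_grad (fun x => (hk_smooth x).1) (fun z => (hk_smooth z).2.continuous)
  obtain ⟨K, hK0, hGband⟩ : ∃ K : ℝ, 0 ≤ K ∧ ∀ x y, |kernelG k ρ C x y| ≤ K := by
    refine ⟨‖LinearMap.toContinuousLinearMap (Matrix.toEuclideanLin C)‖ * (M₀ * M₀),
      mul_nonneg (norm_nonneg _) (mul_nonneg hM₀0 hM₀0), fun x y => ?_⟩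
    exact Gf_bdd (fun x z => gradient (fun w => k x w) z)
      (LinearMap.toContinuousLinearMap (Matrix.toEuclideanLin C)) M₀ hM₀ ρ x y
  have hGmeas : StronglyMeasurable fun p :
      EuclideanSpace ℝ (Fin d) × EuclideanSpace ℝ (Fin d) => kernelG k ρ C p.1 p.2 :=
    Gf_meas (fun x z => gradient (fun w => k x w) z) hgmeas
      (LinearMap.toContinuousLinearMap (Matrix.toEuclideanLin C)) ρ
  have hGsymm : ∀ x y, kernelG k ρ C x y = kernelG k ρ C y x := by
    intro x y
    refine integral_congr_ae (Eventually.of_forall fun z => ?_)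
    exact (inner_toEuclideanLin_symm hC.1 _ _).trans (real_inner_comm _ _)
  have main : ∀ α : EuclideanSpace ℝ (Fin d) → ℝ, MemLp α 2 ρ →
      (∫ x, ∫ y, α x * kernelG k ρ C x y * α y ∂ρ ∂ρ)
        = (∫ z, ‖Matrix.toEuclideanLin hC.sqrt
            (∫ x, α x • gradient (fun w => k x w) z ∂ρ)‖ ^ 2 ∂ρ) := by
    intro α hα
    have h1 := fubini_main (fun x z => gradient (fun w => k x w) z) hgmeas
      (LinearMap.toContinuousLinearMap (Matrix.toEuclideanLin C)) M₀ hM₀ ρ α hα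
    exact h1.trans (integral_congr_ae (Eventually.of_forall fun z => inner_C_eq hC _))
  have hpart1 : ∀ α : EuclideanSpace ℝ (Fin d) → ℝ, MemLp α 2 ρ →
      (∫ x, ∫ y, α x * kernelG k ρ C x y * α y ∂ρ ∂ρ)
        = (∫ z, ‖Matrix.toEuclideanLin hC.sqrt
            (∫ x, α x • gradient (fun w => k x w) z ∂ρ)‖ ^ 2 ∂ρ) ∧
      0 ≤ ∫ x, ∫ y, α x * kernelG k ρ C x y * α y ∂ρ ∂ρ := by
    intro α hα
    refine ⟨main α hα, ?_⟩
    rw [main α hα]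
    exact integral_nonneg fun z => by positivity
  have hTmeas : ∀ α : EuclideanSpace ℝ (Fin d) → ℝ, MemLp α 2 ρ →
      AEStronglyMeasurable (opT k ρ C α) ρ := by
    intro α hα
    have h : AEStronglyMeasurable (fun p : EuclideanSpace ℝ (Fin d) × EuclideanSpace ℝ (Fin d) =>
        kernelG k ρ C p.1 p.2 * α p.2) (ρ.prod ρ) :=
      hGmeas.aestronglyMeasurable.mul hα.1.comp_snd
    exact h.integral_prod_right'
  have hTbound : ∀ (α : EuclideanSpace ℝ (Fin d) → ℝ), MemLp α 2 ρ → ∀ x,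
      ‖opT k ρ C α x‖ ≤ K * ∫ y, ‖α y‖ ∂ρ := by
    intro α hα x
    have hαi : Integrable α ρ := hα.integrable one_le_two
    refine (norm_integral_le_integral_norm _).trans ?_
    rw [← integral_const_mul]
    refine integral_mono_of_nonneg (Eventually.of_forall fun y => norm_nonneg _)
      (hαi.norm.const_mul K) (Eventually.of_forall fun y => ?_)
    show ‖kernelG k ρ C x y * α y‖ ≤ K * ‖α y‖
    rw [norm_mul]
    exact mul_le_mul_of_nonneg_right (by rw [Real.norm_eq_abs]; exact hGband x y) (norm_nonneg _)
  have hTmem : ∀ α : EuclideanSpace ℝ (Fin d) → ℝ, MemLp α 2 ρ → MemLp (opT k ρ C α) 2 ρ :=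
    fun α hα => MemLp.of_bound (hTmeas α hα) _ (Eventually.of_forall (hTbound α hα))
  refine ⟨hpart1, hTmem, ⟨K.toNNReal, ?_⟩, ?_, ?_⟩
  · -- operator norm bound
    intro α hα
    have hαi : Integrable α ρ := hα.integrable one_le_two
    have h1 : eLpNorm (opT k ρ C α) 2 ρ ≤ ENNReal.ofReal (K * ∫ y, ‖α y‖ ∂ρ) := by
      have h := eLpNorm_le_of_ae_bound (p := (2:ℝ≥0∞)) (μ := ρ)
        (Eventually.of_forall (hTbound α hα))
      simpa [measure_univ] using h
    refine h1.trans ?_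
    rw [ENNReal.ofReal_mul hK0]
    have h2 : ENNReal.ofReal (∫ y, ‖α y‖ ∂ρ) ≤ eLpNorm α 2 ρ := by
      rw [ofReal_integral_norm_eq_lintegral_enorm hαi, ← eLpNorm_one_eq_lintegral_enorm]
      exact eLpNorm_le_eLpNorm_of_exponent_le one_le_two hα.1
    calc ENNReal.ofReal K * ENNReal.ofReal (∫ y, ‖α y‖ ∂ρ)
        ≤ ENNReal.ofReal K * eLpNorm α 2 ρ := by gcongr
      _ = (K.toNNReal : ℝ≥0∞) * eLpNorm α 2 ρ := rfl
  · -- self-adjointness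
    intro α β hα hβ
    have hαi : Integrable α ρ := hα.integrable one_le_two
    have hβi : Integrable β ρ := hβ.integrable one_le_two
    have hint : Integrable (fun p : EuclideanSpace ℝ (Fin d) × EuclideanSpace ℝ (Fin d) =>
        kernelG k ρ C p.1 p.2 * α p.2 * β p.1) (ρ.prod ρ) := by
      have hdom : Integrable (fun p : EuclideanSpace ℝ (Fin d) × EuclideanSpace ℝ (Fin d) =>
          (K * ‖β p.1‖) * ‖α p.2‖) (ρ.prod ρ) := (hβi.norm.const_mul K).mul_prod hαi.norm
      refine Integrable.mono' hdom
        ((hGmeas.aestronglyMeasurable.mul hα.1.comp_snd).mul hβ.1.comp_fst)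
        (Eventually.of_forall fun p => ?_)
      simp only [Real.norm_eq_abs, abs_mul]
      calc |kernelG k ρ C p.1 p.2| * |α p.2| * |β p.1|
          ≤ K * |α p.2| * |β p.1| :=
            mul_le_mul_of_nonneg_right
              (mul_le_mul_of_nonneg_right (hGband _ _) (abs_nonneg _)) (abs_nonneg _)
        _ = (K * |β p.1|) * |α p.2| := by ring
    have lhs_eq : (∫ x, opT k ρ C α x * β x ∂ρ)
        = ∫ x, ∫ y, kernelG k ρ C x y * α y * β x ∂ρ ∂ρ := by
      refine integral_congr_ae (Eventually.of_forall fun x => ?_)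
      show opT k ρ C α x * β x = ∫ y, kernelG k ρ C x y * α y * β x ∂ρ
      exact (integral_mul_const (β x) fun y => kernelG k ρ C x y * α y).symm
    rw [lhs_eq, integral_integral_swap
      (f := fun x y => kernelG k ρ C x y * α y * β x) hint]
    refine integral_congr_ae (Eventually.of_forall fun y => ?_)
    show (∫ x, kernelG k ρ C x y * α y * β x ∂ρ) = α y * opT k ρ C β y
    calc (∫ x, kernelG k ρ C x y * α y * β x ∂ρ)
        = ∫ x, α y * (kernelG k ρ C y x * β x) ∂ρ := by
          refine integral_congr_ae (Eventually.of_forall fun x => ?_)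
          show kernelG k ρ C x y * α y * β x = α y * (kernelG k ρ C y x * β x)
          rw [hGsymm x y]; ring
      _ = α y * ∫ x, kernelG k ρ C y x * β x ∂ρ := integral_const_mul _ _
      _ = α y * opT k ρ C β y := rfl
  · -- positivity
    intro α hα
    have heq : ∀ x, α x * opT k ρ C α x = ∫ y, α x * kernelG k ρ C x y * α y ∂ρ := by
      intro x
      calc α x * opT k ρ C α x
          = ∫ y, α x * (kernelG k ρ C x y * α y) ∂ρ := (integral_const_mul _ _).symm
        _ = ∫ y, α x * kernelG k ρ C x y * α y ∂ρ := by
            refine integral_congr_ae (Eventually.of_forall fun y => ?_)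
            ring
    calc (0:ℝ) ≤ ∫ x, ∫ y, α x * kernelG k ρ C x y * α y ∂ρ ∂ρ := (hpart1 α hα).2
      _ = ∫ x, α x * opT k ρ C α x ∂ρ := by
          refine integral_congr_ae (Eventually.of_forall fun x => ?_)
          show (∫ y, α x * kernelG k ρ C x y * α y ∂ρ) = α x * opT k ρ C α x
          rw [heq]
end

section
/- Let π₀ be a probability measure on ℝ^d with continuous, strictly positive density p₀ with respect to Lebesgue measure, and let h : ℝ^d → ℝ be continuous such that x ↦ (1 + |h(x)|)(1 + e^{−h(x)}) is π₀-integrable. For t ∈ [0,1] let π_t denote the density x ↦ e^{−t·h(x)} p₀(x) / Z_t with Z_t := ∫ e^{−t·h} dπ₀. Let C : [0,1] → ℝ^{d×d} take symmetric positive definite values and let φ : [0,1] × ℝ^d → ℝ be such that φ_t is twice continuously differentiable in x and solves the Poisson equation ∇·( π_t C_t ∇φ_t )(x) = −( h(x) − ∫ h dπ_t ) π_t(x) for all t ∈ (0,1) and x ∈ ℝ^d. Then the curve (π_t) satisfies the continuity equation with velocity field v_t := −C_t ∇φ_t, i.e. ∂_t π_t(x) + ∇·( π_t v_t )(x) = 0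 for all t ∈ (0,1) and x ∈ ℝ^d. -/
open MeasureTheory Real

/-- Coordinatewise gradient of a scalar function on `ℝ^d`. -/
noncomputable def pgrad {d : ℕ} (f : (Fin d → ℝ) → ℝ) (x : Fin d → ℝ) : Fin d → ℝ :=
  fun i => fderiv ℝ f x (Pi.single i 1)

/-- Divergence of a vector field on `ℝ^d`. -/
noncomputable def pdiv {d : ℕ} (F : (Fin d → ℝ) → (Fin d → ℝ)) (x : Fin d → ℝ) : ℝ :=
  ∑ i, fderiv ℝ (fun y => F y i) x (Pi.single i 1)

/-- The density `e^{-t·h(x)} p₀(x) / Z_t` of the tempered interpolation `π_t`, where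
`Z_t = ∫ e^{-t·h} dπ₀` and `π₀` has density `p₀` with respect to Lebesgue measure. -/
noncomputable def temperedDensity {d : ℕ} (p₀ : (Fin d → ℝ) → ℝ) (h : (Fin d → ℝ) → ℝ)
    (t : ℝ) (x : Fin d → ℝ) : ℝ :=
  Real.exp (-(t * h x)) * p₀ x /
    ∫ y, Real.exp (-(t * h y)) ∂((volume : Measure (Fin d → ℝ)).withDensity
      fun z => ENNReal.ofReal (p₀ z))

private lemma expBound {s a : ℝ} (hs : s ∈ Set.Icc (0:ℝ) 1) :
    Real.exp (-(s * a)) ≤ 1 + Real.exp (-a) := by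
  rcases le_or_gt 0 a with ha | ha
  · calc Real.exp (-(s * a)) ≤ Real.exp 0 := by
          apply Real.exp_le_exp.2; nlinarith [hs.1, hs.2]
      _ = 1 := Real.exp_zero
      _ ≤ 1 + Real.exp (-a) := le_add_of_nonneg_right (Real.exp_pos _).le
  · calc Real.exp (-(s * a)) ≤ Real.exp (-a) := by
          apply Real.exp_le_exp.2; nlinarith [hs.1, hs.2]
      _ ≤ 1 + Real.exp (-a) := le_add_of_nonneg_left zero_le_one

private lemma hexpBound {s a : ℝ} (hs : s ∈ Set.Icc (0:ℝ) 1) :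
    |a * Real.exp (-(s * a))| ≤ (1 + |a|) * (1 + Real.exp (-a)) := by
  rw [abs_mul, abs_of_pos (Real.exp_pos _)]
  apply mul_le_mul (by linarith [abs_nonneg a]) (expBound hs) (Real.exp_pos _).le
  positivity

/-- If `φ_t` solves the Poisson equation
`∇·(π_t C_t ∇φ_t) = -(h - ∫ h dπ_t) π_t`, then the tempered interpolation `(π_t)` solves
the continuity equation `∂_t π_t + ∇·(π_t v_t) = 0` with velocity `v_t = -C_t ∇φ_t`. -/
theorem stmt16 {d : ℕ} (p₀ : (Fin d → ℝ) → ℝ) (hp₀_cont : Continuous p₀)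
    (hp₀_pos : ∀ x, 0 < p₀ x)
    (hprob : IsProbabilityMeasure ((volume : Measure (Fin d → ℝ)).withDensity
      fun z => ENNReal.ofReal (p₀ z)))
    (h : (Fin d → ℝ) → ℝ) (hh_cont : Continuous h)
    (hint : Integrable (fun x => (1 + |h x|) * (1 + Real.exp (-h x)))
      ((volume : Measure (Fin d → ℝ)).withDensity fun z => ENNReal.ofReal (p₀ z)))
    (C : ℝ → Matrix (Fin d) (Fin d) ℝ)
    (hC : ∀ t ∈ Set.Icc (0 : ℝ) 1, (C t).IsSymm ∧ (C t).PosDef)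
    (φ : ℝ → (Fin d → ℝ) → ℝ) (hφ : ∀ t, ContDiff ℝ 2 (φ t))
    (hPoisson : ∀ t ∈ Set.Ioo (0 : ℝ) 1, ∀ x : Fin d → ℝ,
      pdiv (fun y => temperedDensity p₀ h t y • (C t).mulVec (pgrad (φ t) y)) x
        = -(h x -
            (∫ y, h y * Real.exp (-(t * h y))
                ∂((volume : Measure (Fin d → ℝ)).withDensity
                  fun z => ENNReal.ofReal (p₀ z))) /
              ∫ y, Real.exp (-(t * h y))
                ∂((volume : Measure (Fin d → ℝ)).withDensity
                  fun z => ENNReal.ofReal (p₀ z)))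
          * temperedDensity p₀ h t x) :
    ∀ t ∈ Set.Ioo (0 : ℝ) 1, ∀ x : Fin d → ℝ,
      HasDerivAt (fun s => temperedDensity p₀ h s x)
        (-pdiv (fun y =>
          temperedDensity p₀ h t y • (-(C t).mulVec (pgrad (φ t) y))) x) t := by
  intro t ht x
  set μ := (volume : Measure (Fin d → ℝ)).withDensity (fun z => ENNReal.ofReal (p₀ z))
    with hμdef
  -- measurability helpers
  have hmeas : ∀ s : ℝ, AEStronglyMeasurable (fun y => Real.exp (-(s * h y))) μ := by
    intro s
    exact (Real.continuous_exp.comp ((continuous_const.mul hh_cont).neg)).aestronglyMeasurable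
  have hmeas' : ∀ s : ℝ, AEStronglyMeasurable (fun y => h y * Real.exp (-(s * h y))) μ := by
    intro s
    exact (hh_cont.mul
      (Real.continuous_exp.comp ((continuous_const.mul hh_cont).neg))).aestronglyMeasurable
  -- integrability of e^{-s h}
  have hZint : ∀ s ∈ Set.Icc (0:ℝ) 1, Integrable (fun y => Real.exp (-(s * h y))) μ := by
    intro s hs
    refine hint.mono (hmeas s) (Filter.Eventually.of_forall fun y => ?_)
    rw [Real.norm_eq_abs, abs_of_pos (Real.exp_pos _)]
    calc Real.exp (-(s * h y)) ≤ 1 + Real.exp (-(h y)) := expBound hs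
      _ ≤ (1 + |h y|) * (1 + Real.exp (-(h y))) := by
          nlinarith [abs_nonneg (h y), Real.exp_pos (-(h y))]
      _ ≤ ‖(1 + |h y|) * (1 + Real.exp (-h y))‖ := le_abs_self _
  have ht01 : t ∈ Set.Icc (0:ℝ) 1 := ⟨ht.1.le, ht.2.le⟩
  -- positivity of Z t
  have hZpos : 0 < ∫ y, Real.exp (-(t * h y)) ∂μ := by
    have hi := hZint t ht01
    rw [integral_pos_iff_support_of_nonneg (fun y => (Real.exp_pos _).le) hi]
    have : Function.support (fun y => Real.exp (-(t * h y))) = Set.univ := by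
      ext y; simp [Function.support, (Real.exp_pos (-(t * h y))).ne']
    rw [this, measure_univ]
    norm_num
  have hZne : (∫ y, Real.exp (-(t * h y)) ∂μ) ≠ 0 := hZpos.ne'
  -- derivative of Z
  set ε := min t (1 - t) with hε
  have hεpos : 0 < ε := lt_min ht.1 (by linarith [ht.2])
  have hball : Metric.ball t ε ⊆ Set.Icc (0:ℝ) 1 := by
    intro s hs
    rw [Metric.mem_ball, Real.dist_eq, abs_lt] at hs
    constructor
    · have := min_le_left t (1 - t); simp only [hε] at hs; linarith [hs.1]
    · have := min_le_right t (1 - t); simp only [hε] at hs; linarith [hs.2]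
  have hZderiv : HasDerivAt (fun s => ∫ y, Real.exp (-(s * h y)) ∂μ)
      (∫ y, -(h y) * Real.exp (-(t * h y)) ∂μ) t := by
    have := hasDerivAt_integral_of_dominated_loc_of_deriv_le (μ := μ)
      (F := fun s y => Real.exp (-(s * h y)))
      (F' := fun s y => -(h y) * Real.exp (-(s * h y)))
      (bound := fun y => (1 + |h y|) * (1 + Real.exp (-(h y)))) (Metric.ball_mem_nhds t hεpos)
      (Filter.Eventually.of_forall fun s => hmeas s)
      (hZint t ht01)
      ((hmeas' t).neg.congr (Filter.Eventually.of_forall fun y => by simp only [Pi.neg_apply]; ring))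
      (Filter.Eventually.of_forall fun y s hs => by
        have := hexpBound (a := h y) (hball hs)
        calc ‖-(h y) * Real.exp (-(s * h y))‖ = |h y * Real.exp (-(s * h y))| := by
              rw [Real.norm_eq_abs]; rw [neg_mul, abs_neg]
          _ ≤ _ := this)
      hint
      (Filter.Eventually.of_forall fun y s _ => by
        have h1 : HasDerivAt (fun s : ℝ => -(s * h y)) (-(h y)) s :=
          ((hasDerivAt_mul_const (h y)) : HasDerivAt (fun s : ℝ => s * h y) (h y) s).neg
        have := h1.exp
        refine this.congr_deriv ?_
        ring)
    exact this.2
  -- numerator derivative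
  have hNum : HasDerivAt (fun s => Real.exp (-(s * h x)) * p₀ x)
      (-(h x) * Real.exp (-(t * h x)) * p₀ x) t := by
    have h1 : HasDerivAt (fun s : ℝ => -(s * h x)) (-(h x)) t :=
      ((hasDerivAt_mul_const (h x)) : HasDerivAt (fun s : ℝ => s * h x) (h x) t).neg
    have := (h1.exp).mul_const (p₀ x)
    refine this.congr_deriv ?_
    ring
  -- quotient
  have hQuot := hNum.div hZderiv hZne
  have hgoal : HasDerivAt (fun s => temperedDensity p₀ h s x)
      ((-(h x) * Real.exp (-(t * h x)) * p₀ x * (∫ y, Real.exp (-(t * h y)) ∂μ)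
        - Real.exp (-(t * h x)) * p₀ x * ∫ y, -(h y) * Real.exp (-(t * h y)) ∂μ)
          / (∫ y, Real.exp (-(t * h y)) ∂μ) ^ 2) t := by
    exact hQuot
  convert hgoal using 1
  -- identify the divergence with the Poisson RHS
  have hneg : (-pdiv (fun y =>
      temperedDensity p₀ h t y • (-(C t).mulVec (pgrad (φ t) y))) x)
      = pdiv (fun y => temperedDensity p₀ h t y • (C t).mulVec (pgrad (φ t) y)) x := by
    rw [pdiv, pdiv, ← Finset.sum_neg_distrib]
    apply Finset.sum_congr rfl
    intro i _
    have : (fun y => (temperedDensity p₀ h t y •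
        (-(C t).mulVec (pgrad (φ t) y))) i)
        = fun y => -((temperedDensity p₀ h t y • (C t).mulVec (pgrad (φ t) y)) i) := by
      funext y
      simp [Pi.smul_apply, smul_eq_mul, Matrix.mulVec, mul_comm]
    rw [this, fderiv_fun_neg]
    simp
  rw [hneg, hPoisson t ht x]
  have hIneg : (∫ y, -(h y) * Real.exp (-(t * h y)) ∂μ)
      = -∫ y, h y * Real.exp (-(t * h y)) ∂μ := by
    rw [← integral_neg]
    congr 1
    funext y
    ring
  rw [hIneg]
  simp only [temperedDensity, ← hμdef]
  field_simp
  ring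
end
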